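/- The dynamical system (X, G_{f₀}), with f₀ the vectorial negation, is topologically transitive: for any nonempty open sets U, V ⊆ X, there exists n ≥ 0 such that G_{f₀}^n(U) ∩ V ≠ ∅. -/

import Mathlib

open scoped BigOperators

/-- Distance between environments: number of differing cells. -/
noncomputable def dE (N : ℕ) (E F : Fin N → Bool) : ℝ :=
  ∑ k : Fin N, if E k = F k then 0 else 1

/-- Distance between strategies. -/
noncomputable def dS (N : ℕ) (S T : ℕ → Fin N) : ℝ :=
  (9 / N) * ∑' k : ℕ, |((S k : ℕ) : ℝ) - ((T k : ℕ) : ℝ)| / 10 ^ (k + 1)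

/-- The distance on the phase space `X = ⟦1,N⟧^ℕ × 𝔹^N`. -/
noncomputable def dX (N : ℕ) (X Y : (ℕ → Fin N) × (Fin N → Bool)) : ℝ :=
  dE N X.2 Y.2 + dS N X.1 Y.1

/-- `F_f(k, E)` agrees with `E` except at coordinate `k`, where it is `f(E)_k`. -/
def Ff (N : ℕ) (f : (Fin N → Bool) → (Fin N → Bool)) (k : Fin N)
    (E : Fin N → Bool) : Fin N → Bool :=
  fun j => if j = k then f E k else E j

/-- The chaotic iterations map `G_f(S, E) = (σ S, F_f(S⁰, E))`. -/
def Gf (N : ℕ) (f : (Fin N → Bool) → (Fin N → Bool))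
    (X : (ℕ → Fin N) × (Fin N → Bool)) : (ℕ → Fin N) × (Fin N → Bool) :=
  (fun n => X.1 (n + 1), Ff N f (X.1 0) X.2)

/-- The vectorial boolean negation. -/
def f0 (N : ℕ) : (Fin N → Bool) → (Fin N → Bool) := fun E i => ! E i

/-- Metric openness in the phase space. -/
def IsOpenX (N : ℕ) (U : Set ((ℕ → Fin N) × (Fin N → Bool))) : Prop :=
  ∀ x ∈ U, ∃ ε > 0, ∀ y, dX N x y < ε → y ∈ U

/-! ### Auxiliary machinery -/

/-- Flip coordinate `k` of the environment. -/
def flipC (N : ℕ) (k : Fin N) (E : Fin N → Bool) : Fin N → Bool :=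
  fun j => if j = k then !E j else E j

lemma Ff_f0 (N : ℕ) (k : Fin N) (E : Fin N → Bool) :
    Ff N (f0 N) k E = flipC N k E := by
  funext j
  by_cases h : j = k <;> simp [Ff, f0, flipC, h]

/-- Environment after `n` iterations driven by strategy `S`. -/
def envIter (N : ℕ) (S : ℕ → Fin N) (E : Fin N → Bool) : ℕ → Fin N → Bool
  | 0 => E
  | n+1 => flipC N (S n) (envIter N S E n)

/-- Apply a list of coordinate flips in order. -/
def applyList (N : ℕ) (cs : List (Fin N)) (E : Fin N → Bool) : Fin N → Bool :=
  cs.foldl (fun E j => flipC N j E) E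

lemma applyList_append (N : ℕ) (l1 l2 : List (Fin N)) (E : Fin N → Bool) :
    applyList N (l1 ++ l2) E = applyList N l2 (applyList N l1 E) := by
  simp [applyList, List.foldl_append]

lemma envIter_congr (N : ℕ) (S S' : ℕ → Fin N) (E : Fin N → Bool) (n : ℕ)
    (h : ∀ k < n, S k = S' k) : envIter N S E n = envIter N S' E n := by
  induction n with
  | zero => rfl
  | succ n ih =>
      simp only [envIter, h n (Nat.lt_succ_self n),
        ih (fun k hk => h k (Nat.lt_succ_of_lt hk))]

lemma envIter_add (N : ℕ) (S : ℕ → Fin N) (E : Fin N → Bool) (a b : ℕ) :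
    envIter N S E (a + b) = envIter N (fun k => S (a + k)) (envIter N S E a) b := by
  induction b with
  | zero => rfl
  | succ b ih =>
      show flipC N (S (a + b)) (envIter N S E (a + b)) = _
      simp only [envIter, ih]

lemma envIter_list (N : ℕ) : ∀ (cs : List (Fin N)) (S : ℕ → Fin N) (E : Fin N → Bool),
    (∀ k (h : k < cs.length), S k = cs.get ⟨k, h⟩) →
    envIter N S E cs.length = applyList N cs E := by
  intro cs
  induction cs with
  | nil => intro S E _; rfl
  | cons c l ih =>
      intro S E hS
      have h0 : S 0 = c := hS 0 (Nat.succ_pos _)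
      have hlen : (c :: l).length = 1 + l.length := by simp [Nat.add_comm]
      rw [hlen, envIter_add]
      have h1 : envIter N S E 1 = flipC N c E := by simp [envIter, h0]
      rw [h1, ih (fun k => S (1 + k)) (flipC N c E) ?_]
      · rfl
      · intro k hk
        show S (1 + k) = _
        rw [Nat.add_comm 1 k, hS (k + 1) (Nat.succ_lt_succ hk)]
        rfl

lemma steer (N : ℕ) (E₀ F : Fin N → Bool) :
    ∀ (l : List (Fin N)), l.Nodup → ∀ E : Fin N → Bool,
      (∀ j ∈ l, E j = E₀ j) → ∀ j,
      applyList N (l.flatMap (fun j => if E₀ j = F j then [j, j] else [j])) E j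
        = if j ∈ l then F j else E j := by
  intro l
  induction l with
  | nil => intro _ E _ j; simp [applyList]
  | cons c t ih =>
      intro hnd E hE j
      obtain ⟨hc, hndt⟩ := List.nodup_cons.mp hnd
      rw [List.flatMap_cons, applyList_append]
      have hEc : E c = E₀ c := hE c List.mem_cons_self
      have hE' : ∀ j, applyList N (if E₀ c = F c then [c, c] else [c]) E j
          = if j = c then F c else E j := by
        intro j
        by_cases h : E₀ c = F c
        · simp only [h, if_pos]
          have : applyList N [c, c] E = E := by
            funext i
            by_cases hi : i = c <;> simp [applyList, flipC, hi]
          rw [this]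
          by_cases hj : j = c
          · rw [if_pos hj, hj, hEc, h]
          · rw [if_neg hj]
        · simp only [h, if_neg]
          by_cases hj : j = c
          · rw [if_pos hj, hj]
            simp only [applyList, List.foldl, flipC, if_pos rfl, hEc]
            cases hEF : E₀ c <;> cases hF : F c <;> simp_all [flipC]
          · rw [if_neg hj]; simp [applyList, flipC, hj]
      rw [show (applyList N (if E₀ c = F c then [c, c] else [c]) E) = fun j => if j = c then F c else E j from funext hE']
      rw [ih hndt _ ?_ j]
      · by_cases hjt : j ∈ t
        · simp [hjt, List.mem_cons]
        · by_cases hjc : j = c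
          · simp [hjt, hjc]
          · simp [hjt, hjc, List.mem_cons]
      · intro i hi
        have : i ≠ c := fun h => hc (h ▸ hi)
        simp only [if_neg this]
        exact hE i (List.mem_cons_of_mem _ hi)

lemma iterGf (N : ℕ) (S : ℕ → Fin N) (E : Fin N → Bool) (n : ℕ) :
    (Gf N (f0 N))^[n] (S, E) = (fun k => S (k + n), envIter N S E n) := by
  induction n with
  | zero => simp [envIter]
  | succ n ih =>
      rw [Function.iterate_succ_apply', ih]
      refine Prod.ext ?_ ?_
      · funext k
        show S (k + 1 + n) = S (k + (n + 1))
        congr 1; omega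
      · show Ff N (f0 N) (S (0 + n)) (envIter N S E n) = envIter N S E (n + 1)
        rw [Ff_f0, Nat.zero_add]
        rfl

/-- `(X, G_{f₀})` is topologically transitive. -/
theorem Gf0_transitive (N : ℕ) (hN : 1 ≤ N)
    (U V : Set ((ℕ → Fin N) × (Fin N → Bool)))
    (hU : IsOpenX N U) (hV : IsOpenX N V)
    (hUne : U.Nonempty) (hVne : V.Nonempty) :
    ∃ n : ℕ, ∃ x ∈ U, (Gf N (f0 N))^[n] x ∈ V := by
  obtain ⟨⟨S, E⟩, hSE⟩ := hUne
  obtain ⟨⟨T, F⟩, hTF⟩ := hVne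
  obtain ⟨ε, hε, hball⟩ := hU _ hSE
  obtain ⟨m, hm⟩ : ∃ m : ℕ, (1/10 : ℝ) ^ m < ε := exists_pow_lt_of_lt_one hε (by norm_num)
  set Em : Fin N → Bool := envIter N S E m with hEm
  set cs : List (Fin N) :=
    (List.finRange N).flatMap (fun j => if Em j = F j then [j, j] else [j]) with hcs
  set S' : ℕ → Fin N := fun k =>
    if k < m then S k
    else if h : k - m < cs.length then cs.get ⟨k - m, h⟩
    else T (k - m - cs.length) with hS'
  have hNR : (0:ℝ) < N := by exact_mod_cast hN
  refine ⟨m + cs.length, (S', E), ?_, ?_⟩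
  · apply hball
    -- dX N (S,E) (S',E) < ε
    have hdE : dE N E E = 0 := by simp [dE]
    set f : ℕ → ℝ := fun k => |((S k : ℕ) : ℝ) - ((S' k : ℕ) : ℝ)| / 10 ^ (k + 1) with hf
    set g : ℕ → ℝ := fun k => if k < m then 0 else (N : ℝ) * (1/10) ^ (k + 1) with hg
    have hf0 : ∀ k, 0 ≤ f k := by
      intro k
      apply div_nonneg (abs_nonneg _) (by positivity)
    have hfg : ∀ k, f k ≤ g k := by
      intro k
      by_cases hk : k < m
      · have hS'k : S' k = S k := by simp only [hS']; rw [if_pos hk]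
        simp [hf, hg, hk, hS'k]
      · simp only [hf, hg, if_neg hk]
        have h1 : ((S k : ℕ) : ℝ) < N := by exact_mod_cast (S k).2
        have h2 : ((S' k : ℕ) : ℝ) < N := by exact_mod_cast (S' k).2
        have h3 : (0:ℝ) ≤ ((S k : ℕ) : ℝ) := by positivity
        have h4 : (0:ℝ) ≤ ((S' k : ℕ) : ℝ) := by positivity
        have habs : |((S k : ℕ) : ℝ) - ((S' k : ℕ) : ℝ)| ≤ N := by
          rw [abs_le]; constructor <;> linarith
        have : (N : ℝ) * (1/10) ^ (k+1) = (N : ℝ) / 10 ^ (k+1) := by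
          rw [div_pow]
          ring
        rw [this]
        gcongr
    have hmaj : Summable (fun k : ℕ => (N : ℝ) * (1/10) ^ (k + 1)) := by
      have h := (summable_geometric_of_lt_one (r := (1/10:ℝ)) (by norm_num)
        (by norm_num)).mul_left ((N : ℝ) * (1/10))
      refine h.congr fun k => ?_
      rw [pow_succ]
      ring
    have hgs : Summable g := by
      apply Summable.of_nonneg_of_le (f := fun k : ℕ => (N : ℝ) * (1/10) ^ (k + 1))
        (g := g) ?_ ?_ hmaj
      · intro k
        simp only [hg]
        by_cases hk : k < m <;> simp [hk] <;> positivity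
      · intro k
        simp only [hg]
        by_cases hk : k < m <;> simp [hk] <;> positivity
    have hfs : Summable f := Summable.of_nonneg_of_le hf0 hfg hgs
    have h1 : ∑' k, f k ≤ ∑' k, g k := Summable.tsum_le_tsum hfg hfs hgs
    have h2 : ∑' k, g k = (N : ℝ) * (1/10) ^ (m+1) * (10/9) := by
      rw [← Summable.sum_add_tsum_nat_add m hgs]
      have hz : ∑ i ∈ Finset.range m, g i = 0 := by
        apply Finset.sum_eq_zero
        intro i hi
        simp [hg, Finset.mem_range.mp hi]
      have hsh : ∀ i : ℕ, g (i + m) = ((N : ℝ) * (1/10) ^ (m+1)) * (1/10) ^ i := by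
        intro i
        have hni : ¬ (i + m < m) := by omega
        simp only [hg, if_neg hni]
        rw [show i + m + 1 = (m + 1) + i from by omega, pow_add]
        ring
      rw [hz, zero_add, tsum_congr hsh, tsum_mul_left,
        tsum_geometric_of_lt_one (by norm_num) (by norm_num)]
      norm_num
    have hdS : dS N S S' ≤ (1/10 : ℝ) ^ m := by
      have : dS N S S' = (9 / N) * ∑' k, f k := rfl
      rw [this]
      have hbound : (9 / (N:ℝ)) * ∑' k, f k ≤ (9 / N) * ((N : ℝ) * (1/10) ^ (m+1) * (10/9)) := by
        apply mul_le_mul_of_nonneg_left _ (by positivity)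
        rw [← h2]; exact h1
      have heq : (9 / (N:ℝ)) * ((N : ℝ) * (1/10) ^ (m+1) * (10/9)) = (1/10) ^ m := by
        rw [pow_succ]
        field_simp
      linarith
    show dX N (S, E) (S', E) < ε
    have : dX N (S, E) (S', E) = dE N E E + dS N S S' := rfl
    rw [this, hdE, zero_add]
    linarith
  · rw [iterGf]
    have hfst : (fun k => S' (k + (m + cs.length))) = T := by
      funext k
      simp only [hS']
      rw [if_neg (by omega), dif_neg (by omega)]
      congr 1
      omega
    have hsnd : envIter N S' E (m + cs.length) = F := by
      rw [envIter_add]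
      have e1 : envIter N S' E m = Em := by
        rw [hEm]
        exact envIter_congr N S' S E m (fun k hk => by simp only [hS']; rw [if_pos hk])
      rw [e1]
      have e2 : envIter N (fun k => S' (m + k)) Em cs.length = applyList N cs Em := by
        apply envIter_list
        intro k hk
        show S' (m + k) = _
        simp only [hS']
        rw [if_neg (by omega)]
        simp only [show m + k - m = k from by omega]
        rw [dif_pos hk]
      rw [e2]
      funext j
      rw [hcs, steer N Em F (List.finRange N) (List.nodup_finRange N) Em (fun j _ => rfl) j]
      simp [List.mem_finRange]
    rw [hfst, hsnd]
    exact hTF
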